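/- Let μ ∈ ℂ, let s ≥ 1, and let k₁, …, k_s be positive integers with K = k₁ + ⋯ + k_s. Then the single K×K Jordan block J_K(μ) (the K×K matrix with μ on the diagonal, 1 on the superdiagonal, and zeros elsewhere) belongs to the closure, in the space of K×K complex matrices with its standard topology, of the set { P · (J_{k₁}(a₁) ⊕ ⋯ ⊕ J_{k_s}(a_s)) · P⁻¹ : a₁, …, a_s ∈ ℂ pairwise distinct, P an invertible K×K complex matrix }, where ⊕ denotes the block-diagonal direct sum. -/

import Mathlib

/-- The `k × k` Jordan block with eigenvalue `a`: `a` on the diagonal, `1` on the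
superdiagonal, zeros elsewhere. -/
def jordanBlock (k : ℕ) (a : ℂ) : Matrix (Fin k) (Fin k) ℂ :=
  fun i j => if (j : ℕ) = (i : ℕ) then a else if (j : ℕ) = (i : ℕ) + 1 then 1 else 0


open Polynomial Matrix Finset

noncomputable section CoalesceAux

/-- superdiagonal nilpotent matrix -/
def nilp (K : ℕ) : Matrix (Fin K) (Fin K) ℂ :=
  Matrix.of fun i j => if (j : ℕ) = (i : ℕ) + 1 then 1 else 0

/-- bidiagonal matrix: diagonal `d`, superdiagonal `1` -/
def bidiag {K : ℕ} (d : Fin K → ℂ) : Matrix (Fin K) (Fin K) ℂ :=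
  Matrix.of fun i j => if (j : ℕ) = (i : ℕ) then d i else if (j : ℕ) = (i : ℕ) + 1 then 1 else 0

lemma bidiag_eq {K : ℕ} (d : Fin K → ℂ) : bidiag d = Matrix.diagonal d + nilp K := by
  ext i j
  simp only [bidiag, nilp, Matrix.of_apply, Matrix.add_apply, Matrix.diagonal_apply]
  rcases eq_or_ne i j with h | h
  · subst h; simp
  · have : (j : ℕ) ≠ (i : ℕ) := fun hh => h (Fin.ext hh.symm)
    simp [this, h]

lemma nilp_pow_apply {K : ℕ} (m : ℕ) (i j : Fin K) :
    ((nilp K ^ m)) i j = if (j : ℕ) = (i : ℕ) + m then 1 else 0 := by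
  induction m generalizing j with
  | zero =>
    simp [Matrix.one_apply, Fin.ext_iff, eq_comm]
  | succ m ih =>
    rw [pow_succ, Matrix.mul_apply]
    by_cases hj : (j : ℕ) = (i : ℕ) + m + 1
    · have him : (i : ℕ) + m < K := by have := j.isLt; omega
      rw [if_pos (by omega), Finset.sum_eq_single (⟨(i : ℕ) + m, him⟩ : Fin K)]
      · rw [ih]; simp [nilp, hj]
      · intro l _ hl
        have hlv : (l : ℕ) ≠ (i : ℕ) + m := fun hh => hl (Fin.ext hh)
        rw [ih]; simp [hlv]
      · intro h; exact absurd (Finset.mem_univ _) h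
    · rw [if_neg (by omega)]
      apply Finset.sum_eq_zero
      intro l _
      rcases eq_or_ne ((l : ℕ)) ((i : ℕ) + m) with hl | hl
      · have : (j : ℕ) ≠ (l : ℕ) + 1 := by omega
        simp [nilp, this]
      · rw [ih]; simp [hl]

lemma nilp_pow_self {K : ℕ} : (nilp K) ^ K = 0 := by
  ext i j
  rw [nilp_pow_apply]
  have := j.isLt
  simp only [Matrix.zero_apply]
  rw [if_neg (by omega)]

lemma aeval_X_sub_C' (k : ℕ) (a : ℂ) :
    (Polynomial.aeval (jordanBlock k a)) (X - C a) = nilp k := by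
  rw [map_sub, aeval_X, aeval_C]
  ext i j
  rw [Matrix.sub_apply]
  simp only [jordanBlock, nilp, Matrix.of_apply, Algebra.algebraMap_eq_smul_one,
    Matrix.smul_apply, Matrix.one_apply, smul_eq_mul, mul_ite, mul_one, mul_zero]
  rcases eq_or_ne i j with h | h
  · subst h; simp
  · have : (j : ℕ) ≠ (i : ℕ) := fun hh => h (Fin.ext hh.symm)
    simp [this, h]

lemma aeval_X_sub_C_pow (k : ℕ) (a : ℂ) (m : ℕ) :
    (Polynomial.aeval (jordanBlock k a)) ((X - C a) ^ m) = nilp k ^ m := by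
  rw [map_pow, aeval_X_sub_C']

end CoalesceAux

noncomputable section Chunk2
open Polynomial Matrix Finset

/-- characteristic polynomial of the direct sum -/
def pchar (s : ℕ) (k : Fin s → ℕ) (a : Fin s → ℂ) : ℂ[X] :=
  ∏ i : Fin s, (X - C (a i)) ^ (k i)

lemma pchar_monic (s : ℕ) (k : Fin s → ℕ) (a : Fin s → ℂ) : (pchar s k a).Monic :=
  monic_prod_of_monic _ _ fun i _ => (monic_X_sub_C (a i)).pow (k i)

lemma pchar_natDegree (s : ℕ) (k : Fin s → ℕ) (a : Fin s → ℂ) :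
    (pchar s k a).natDegree = ∑ i : Fin s, k i := by
  rw [pchar, natDegree_prod]
  · simp [natDegree_pow]
  · intro i _
    exact pow_ne_zero _ (X_sub_C_ne_zero (a i))

lemma aeval_jordan_pchar (s : ℕ) (k : Fin s → ℕ) (a : Fin s → ℂ) (i : Fin s) :
    (Polynomial.aeval (jordanBlock (k i) (a i))) (pchar s k a) = 0 := by
  rw [pchar, ← Finset.mul_prod_erase _ _ (Finset.mem_univ i), _root_.map_mul,
    aeval_X_sub_C_pow, nilp_pow_self, zero_mul]

lemma nilp_pow_mulVec {K : ℕ} (hK : 1 ≤ K) (m : ℕ) (i : Fin K) :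
    ((nilp K ^ m) *ᵥ Pi.single (⟨K - 1, by omega⟩ : Fin K) 1) i
      = if (i : ℕ) + m = K - 1 then 1 else 0 := by
  rw [Matrix.mulVec_single]
  simp only [Pi.smul_apply, Matrix.col_apply, op_smul_eq_mul, mul_one]
  rw [nilp_pow_apply]
  simp only [eq_comm]

lemma sum_mulVec' {K : ℕ} {ι : Type*} (s : Finset ι) (f : ι → Matrix (Fin K) (Fin K) ℂ)
    (v : Fin K → ℂ) : (∑ i ∈ s, f i) *ᵥ v = ∑ i ∈ s, f i *ᵥ v :=
  map_sum (AddMonoidHom.mk' (fun M : Matrix (Fin K) (Fin K) ℂ => M *ᵥ v)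
    (fun A B => Matrix.add_mulVec A B v)) f s

lemma dvd_of_aeval_jordan_mulVec_eq_zero {k : ℕ} (hk : 1 ≤ k) (a : ℂ) (q : ℂ[X])
    (h : (Polynomial.aeval (jordanBlock k a)) q *ᵥ Pi.single (⟨k - 1, by omega⟩ : Fin k) 1 = 0) :
    (X - C a) ^ k ∣ q := by
  set g : ℂ[X] := (X - C a) ^ k with hgdef
  have hg : g.Monic := (monic_X_sub_C a).pow k
  rw [← Polynomial.modByMonic_eq_zero_iff_dvd hg]
  set r : ℂ[X] := q %ₘ g with hrdef
  by_cases hr0 : r = 0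
  · exact hr0
  -- degree bound
  have hdeg : r.natDegree < k := by
    have h1 : r.degree < g.degree := Polynomial.degree_modByMonic_lt q hg
    have h2 : g.natDegree = k := by
      rw [hgdef, natDegree_pow, natDegree_X_sub_C, mul_one]
    have := Polynomial.natDegree_lt_natDegree hr0 h1
    omega
  -- aeval r kills the vector too
  have hgz : (Polynomial.aeval (jordanBlock k a)) g = 0 := by
    rw [hgdef, aeval_X_sub_C_pow, nilp_pow_self]
  have hr : (Polynomial.aeval (jordanBlock k a)) r *ᵥ Pi.single (⟨k - 1, by omega⟩ : Fin k) 1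
      = 0 := by
    have hq : q = r + g * (q /ₘ g) := by
      conv_lhs => rw [← Polynomial.modByMonic_add_div q g]
    rw [hq] at h
    rw [map_add, _root_.map_mul, hgz, zero_mul, add_zero] at h
    exact h
  -- taylor expansion
  set T : ℂ[X] := Polynomial.taylor a r with hTdef
  have hT : T = 0 := by
    ext m
    by_cases hm : m < k
    · -- evaluate hr at index k-1-m
      have hi : k - 1 - m < k := by omega
      have := congrFun hr ⟨k - 1 - m, hi⟩
      rw [Pi.zero_apply] at this
      -- expand aeval r via taylor sum
      have hrsum : r = T.sum fun i c => C c * (X - C a) ^ i :=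
        (Polynomial.sum_taylor_eq r a).symm
      rw [hrsum, Polynomial.sum] at this
      rw [map_sum] at this
      rw [sum_mulVec'] at this
      rw [Finset.sum_apply] at this
      have hterm : ∀ n ∈ T.support,
          ((Polynomial.aeval (jordanBlock k a)) (C (T.coeff n) * (X - C a) ^ n) *ᵥ
            Pi.single (⟨k - 1, by omega⟩ : Fin k) 1) ⟨k - 1 - m, hi⟩
          = if n = m then T.coeff n else 0 := by
        intro n hn
        have hnk : n < k := by
          have : n ≤ T.natDegree := Polynomial.le_natDegree_of_ne_zero
            (Polynomial.mem_support_iff.mp hn)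
          rw [hTdef, Polynomial.natDegree_taylor] at this
          omega
        rw [_root_.map_mul, aeval_C, aeval_X_sub_C_pow, Algebra.algebraMap_eq_smul_one,
          smul_mul_assoc, one_mul, Matrix.smul_mulVec, Pi.smul_apply,
          nilp_pow_mulVec hk]
        by_cases hnm : n = m
        · subst hnm
          rw [if_pos (by simp only [Fin.val_mk]; omega), if_pos rfl]
          simp
        · rw [if_neg (by simp only [Fin.val_mk]; omega), if_neg hnm]
          simp
      rw [Finset.sum_congr rfl hterm] at this
      rw [Finset.sum_ite_eq' T.support m (fun n => T.coeff n)] at this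
      by_cases hms : m ∈ T.support
      · rw [if_pos hms] at this; exact this
      · exact Polynomial.notMem_support_iff.mp hms
    · apply Polynomial.coeff_eq_zero_of_natDegree_lt
      rw [hTdef, Polynomial.natDegree_taylor]
      omega
  have : r = 0 := by
    have := Polynomial.taylor_injective a (by rw [← hTdef, hT, map_zero] : Polynomial.taylor a r = Polynomial.taylor a 0)
    exact this
  exact absurd this hr0

end Chunk2

noncomputable section Chunk3
open Polynomial Matrix Finset

/-- Krylov matrix with columns `A^j v` -/
def kry {K : ℕ} (A : Matrix (Fin K) (Fin K) ℂ) (v : Fin K → ℂ) : Matrix (Fin K) (Fin K) ℂ :=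
  Matrix.of fun i j => ((A ^ (j : ℕ)) *ᵥ v) i

/-- companion-type matrix of a monic polynomial of degree `K` -/
def compan (K : ℕ) (p : ℂ[X]) : Matrix (Fin K) (Fin K) ℂ :=
  Matrix.of fun l j => if (j : ℕ) + 1 = K then -p.coeff (l : ℕ)
    else if (l : ℕ) = (j : ℕ) + 1 then 1 else 0

lemma kry_spec {K : ℕ} (A : Matrix (Fin K) (Fin K) ℂ) (v : Fin K → ℂ) (p : ℂ[X])
    (hm : p.Monic) (hd : p.natDegree = K) (hA : (Polynomial.aeval A) p = 0) :
    A * kry A v = kry A v * compan K p := by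
  -- A^K = -∑_{l<K} coeff l • A^l
  have hAK : A ^ K = -∑ l : Fin K, p.coeff (l : ℕ) • A ^ (l : ℕ) := by
    have h1 : (0 : Matrix (Fin K) (Fin K) ℂ)
        = ∑ l ∈ Finset.range (K + 1), p.coeff l • A ^ l := by
      rw [← hA, Polynomial.aeval_eq_sum_range' (by omega : p.natDegree < K + 1)]
    rw [Finset.sum_range_succ] at h1
    have h2 : p.coeff K = 1 := by rw [← hd]; exact hm.coeff_natDegree
    rw [h2, one_smul] at h1
    have := congrArg (fun M => M - ∑ l ∈ Finset.range K, p.coeff l • A ^ l) h1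
    simp only [zero_sub, add_sub_cancel_left] at this
    rw [← this, Fin.sum_univ_eq_sum_range (fun l => p.coeff l • A ^ l)]
  ext i j
  rw [Matrix.mul_apply, Matrix.mul_apply]
  have hAkry : ∀ l : Fin K, kry A v i l = ((A ^ (l : ℕ)) *ᵥ v) i := fun _ => rfl
  have lhs_eq : ∑ l : Fin K, A i l * kry A v l j = ((A ^ ((j : ℕ) + 1)) *ᵥ v) i := by
    have : ∑ l : Fin K, A i l * kry A v l j = (A *ᵥ ((A ^ (j : ℕ)) *ᵥ v)) i := by
      rw [Matrix.mulVec, dotProduct]; rfl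
    rw [this, Matrix.mulVec_mulVec, ← pow_succ']
  rw [lhs_eq]
  by_cases hj : (j : ℕ) + 1 = K
  · -- last column
    have : ∑ l : Fin K, kry A v i l * compan K p l j
        = ∑ l : Fin K, (-(p.coeff (l : ℕ))) * (((A ^ (l : ℕ)) *ᵥ v) i) := by
      apply Finset.sum_congr rfl
      intro l _
      rw [hAkry, compan, Matrix.of_apply, if_pos hj, mul_comm]
    rw [this, hj, hAK]
    rw [Matrix.neg_mulVec, Pi.neg_apply]
    rw [sum_mulVec', Finset.sum_apply]
    rw [← Finset.sum_neg_distrib]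
    apply Finset.sum_congr rfl
    intro l _
    rw [Matrix.smul_mulVec, Pi.smul_apply, smul_eq_mul, neg_mul]
  · have hjK : (j : ℕ) + 1 < K := by have := j.isLt; omega
    rw [Finset.sum_eq_single (⟨(j : ℕ) + 1, hjK⟩ : Fin K)]
    · rw [hAkry, compan, Matrix.of_apply, if_neg hj, if_pos (by simp), mul_one]
    · intro l _ hl
      have : (l : ℕ) ≠ (j : ℕ) + 1 := fun hh => hl (Fin.ext hh)
      rw [compan, Matrix.of_apply, if_neg hj, if_neg this, mul_zero]
    · intro h; exact absurd (Finset.mem_univ _) h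

lemma kry_mulVec {K : ℕ} (A : Matrix (Fin K) (Fin K) ℂ) (v : Fin K → ℂ) (c : Fin K → ℂ) :
    kry A v *ᵥ c = (Polynomial.aeval A) (∑ j : Fin K, C (c j) * X ^ (j : ℕ)) *ᵥ v := by
  rw [map_sum]
  rw [sum_mulVec']
  ext i
  rw [Matrix.mulVec, dotProduct, Finset.sum_apply]
  apply Finset.sum_congr rfl
  intro j _
  rw [_root_.map_mul, aeval_C, map_pow, aeval_X, Algebra.algebraMap_eq_smul_one,
    smul_mul_assoc, one_mul, Matrix.smul_mulVec, Pi.smul_apply, smul_eq_mul]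
  rw [mul_comm]
  rfl

end Chunk3

noncomputable section Chunk4
open Polynomial Matrix Finset

lemma bidiag_mulVec {K : ℕ} (d : Fin K → ℂ) (x : Fin K → ℂ) (i : Fin K) :
    (bidiag d *ᵥ x) i = d i * x i + (if h : (i : ℕ) + 1 < K then x ⟨(i : ℕ) + 1, h⟩ else 0) := by
  rw [Matrix.mulVec, dotProduct]
  rw [← Finset.add_sum_erase _ _ (Finset.mem_univ i)]
  congr 1
  · simp [bidiag]
  · by_cases h : (i : ℕ) + 1 < K
    · rw [dif_pos h]
      rw [Finset.sum_eq_single_of_mem (⟨(i : ℕ) + 1, h⟩ : Fin K)]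
      · rw [bidiag, Matrix.of_apply, if_neg (by simp), if_pos (by simp), one_mul]
      · apply Finset.mem_erase.mpr
        exact ⟨fun hh => by simpa using congrArg Fin.val hh, Finset.mem_univ _⟩
      · intro l hl hl2
        have h1 : l ≠ i := (Finset.mem_erase.mp hl).1
        have h2 : (l : ℕ) ≠ (i : ℕ) := fun hh => h1 (Fin.ext hh)
        have h3 : (l : ℕ) ≠ (i : ℕ) + 1 := fun hh => hl2 (Fin.ext hh)
        rw [bidiag, Matrix.of_apply, if_neg h2, if_neg h3, zero_mul]
    · rw [dif_neg h]
      apply Finset.sum_eq_zero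
      intro l hl
      have h1 : l ≠ i := (Finset.mem_erase.mp hl).1
      have h2 : (l : ℕ) ≠ (i : ℕ) := fun hh => h1 (Fin.ext hh)
      have h3 : (l : ℕ) ≠ (i : ℕ) + 1 := by have := l.isLt; omega
      rw [bidiag, Matrix.of_apply, if_neg h2, if_neg h3, zero_mul]

lemma bidiag_pow_mulVec {K : ℕ} (hK : 1 ≤ K) (d : Fin K → ℂ) (m : ℕ) (i : Fin K)
    (h : (i : ℕ) + m ≤ K - 1) :
    ((bidiag d ^ m) *ᵥ Pi.single (⟨K - 1, by omega⟩ : Fin K) 1) i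
      = if (i : ℕ) + m = K - 1 then 1 else 0 := by
  induction m generalizing i with
  | zero =>
    rw [pow_zero, Matrix.one_mulVec, Pi.single_apply]
    simp only [Fin.ext_iff, Fin.val_mk, add_zero]
  | succ m ih =>
    rw [pow_succ', ← Matrix.mulVec_mulVec, bidiag_mulVec]
    have hx : ((bidiag d ^ m) *ᵥ Pi.single (⟨K - 1, by omega⟩ : Fin K) 1) i = 0 := by
      rw [ih i (by omega)]
      rw [if_neg (by omega)]
    have hi1 : (i : ℕ) + 1 < K := by omega
    rw [hx, mul_zero, zero_add, dif_pos hi1]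
    rw [ih ⟨(i : ℕ) + 1, hi1⟩ (by simp only [Fin.val_mk]; omega)]
    simp only [Fin.val_mk]
    congr 1
    simp only [eq_iff_iff]
    omega

lemma det_kry_bidiag_ne_zero {K : ℕ} (hK : 1 ≤ K) (d : Fin K → ℂ) :
    (kry (bidiag d) (Pi.single (⟨K - 1, by omega⟩ : Fin K) 1)).det ≠ 0 := by
  set M := kry (bidiag d) (Pi.single (⟨K - 1, by omega⟩ : Fin K) 1) with hM
  set M' : Matrix (Fin K) (Fin K) ℂ := Matrix.of fun i j => M (Fin.rev i) j with hM'
  have hMentry : ∀ i j : Fin K, (i : ℕ) + (j : ℕ) ≤ K - 1 →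
      M i j = if (i : ℕ) + (j : ℕ) = K - 1 then 1 else 0 := by
    intro i j hij
    exact bidiag_pow_mulVec hK d (j : ℕ) i hij
  have htri : M'.BlockTriangular id := by
    intro i j hij
    simp only [id] at hij
    have h1 : ((Fin.rev i : Fin K) : ℕ) = K - 1 - (i : ℕ) := by
      simp [Fin.rev]; omega
    have h2 : ((Fin.rev i : Fin K) : ℕ) + (j : ℕ) ≤ K - 1 := by
      have := i.isLt; have := j.isLt
      rw [h1]; omega
    rw [hM', Matrix.of_apply, hMentry _ _ h2, if_neg (by have := i.isLt; rw [h1]; omega)]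
  have hdet' : M'.det = 1 := by
    rw [Matrix.det_of_upperTriangular htri]
    apply Finset.prod_eq_one
    intro i _
    have h1 : ((Fin.rev i : Fin K) : ℕ) = K - 1 - (i : ℕ) := by
      simp [Fin.rev]; omega
    rw [hM', Matrix.of_apply, hMentry _ _ (by have := i.isLt; rw [h1]; omega),
      if_pos (by have := i.isLt; rw [h1]; omega)]
  have hperm : M'.det = (((Equiv.Perm.sign (Fin.revPerm : Equiv.Perm (Fin K))) : ℤ) : ℂ) * M.det := by
    have : M' = fun i => M (Fin.revPerm i) := rfl
    rw [this]
    exact Matrix.det_permute _ M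
  intro h0
  rw [hperm, h0, mul_zero] at hdet'
  exact zero_ne_one hdet'

end Chunk4

noncomputable section Chunk5
open Polynomial Matrix Finset

/-- `blockDiagonal'` as an algebra hom -/
def bdAlgHom (s : ℕ) (k : Fin s → ℕ) :
    (∀ i : Fin s, Matrix (Fin (k i)) (Fin (k i)) ℂ) →ₐ[ℂ]
      Matrix (Σ i : Fin s, Fin (k i)) (Σ i : Fin s, Fin (k i)) ℂ :=
  { Matrix.blockDiagonal'RingHom (fun i : Fin s => Fin (k i)) ℂ with
    commutes' := fun c => by
      show Matrix.blockDiagonal' _ = _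
      have h1 : (algebraMap ℂ (∀ i : Fin s, Matrix (Fin (k i)) (Fin (k i)) ℂ)) c
          = c • (1 : ∀ i : Fin s, Matrix (Fin (k i)) (Fin (k i)) ℂ) :=
        Algebra.algebraMap_eq_smul_one c
      rw [h1, Matrix.blockDiagonal'_smul, Matrix.blockDiagonal'_one,
        ← Algebra.algebraMap_eq_smul_one] }

lemma aeval_blockDiagonal' (s : ℕ) (k : Fin s → ℕ)
    (M : ∀ i : Fin s, Matrix (Fin (k i)) (Fin (k i)) ℂ) (q : ℂ[X]) :
    (Polynomial.aeval (Matrix.blockDiagonal' M)) q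
      = Matrix.blockDiagonal' (fun i => (Polynomial.aeval (M i)) q) := by
  have h1 : Matrix.blockDiagonal' M = bdAlgHom s k M := rfl
  rw [h1, Polynomial.aeval_algHom_apply (bdAlgHom s k) M q]
  exact congrArg (bdAlgHom s k) (funext fun i => (Polynomial.aeval_algHom_apply
    (Pi.evalAlgHom ℂ (fun i : Fin s => Matrix (Fin (k i)) (Fin (k i)) ℂ) i) M q).symm)

lemma blockDiagonal'_mulVec (s : ℕ) (k : Fin s → ℕ)
    (M : ∀ i : Fin s, Matrix (Fin (k i)) (Fin (k i)) ℂ)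
    (x : (Σ i : Fin s, Fin (k i)) → ℂ) (i : Fin s) (m : Fin (k i)) :
    (Matrix.blockDiagonal' M *ᵥ x) ⟨i, m⟩ = (M i *ᵥ fun m' => x ⟨i, m'⟩) m := by
  rw [Matrix.mulVec, dotProduct, ← Finset.univ_sigma_univ, Finset.sum_sigma]
  rw [Finset.sum_eq_single i]
  · rw [Matrix.mulVec, dotProduct]
    apply Finset.sum_congr rfl
    intro m' _
    rw [Matrix.blockDiagonal'_apply_eq]
  · intro i' _ hi'
    apply Finset.sum_eq_zero
    intro m' _
    rw [Matrix.blockDiagonal'_apply_ne _ _ _ (Ne.symm hi'), zero_mul]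
  · intro h; exact absurd (Finset.mem_univ _) h

end Chunk5

noncomputable section Chunk6
open Polynomial Matrix Finset

def vlast (s : ℕ) (k : Fin s → ℕ) : (Σ i : Fin s, Fin (k i)) → ℂ :=
  fun σ => if (σ.2 : ℕ) = k σ.1 - 1 then 1 else 0

lemma aeval_D_eq (s : ℕ) (k : Fin s → ℕ) (a : Fin s → ℂ)
    (e : (Σ i : Fin s, Fin (k i)) ≃ Fin (∑ i : Fin s, k i)) (q : ℂ[X]) :
    (Polynomial.aeval ((Matrix.reindex e e)
        (Matrix.blockDiagonal' (fun i : Fin s => jordanBlock (k i) (a i))))) q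
      = (Matrix.reindex e e) (Matrix.blockDiagonal'
          (fun i : Fin s => (Polynomial.aeval (jordanBlock (k i) (a i))) q)) := by
  have h1 : (Matrix.reindex e e)
        (Matrix.blockDiagonal' (fun i : Fin s => jordanBlock (k i) (a i)))
      = (Matrix.reindexAlgEquiv ℂ ℂ e)
        (Matrix.blockDiagonal' (fun i : Fin s => jordanBlock (k i) (a i))) := rfl
  rw [h1, Polynomial.aeval_algHom_apply (Matrix.reindexAlgEquiv ℂ ℂ e) _ q]
  rw [aeval_blockDiagonal']
  rfl

lemma aeval_D_pchar_zero (s : ℕ) (k : Fin s → ℕ) (a : Fin s → ℂ)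
    (e : (Σ i : Fin s, Fin (k i)) ≃ Fin (∑ i : Fin s, k i)) :
    (Polynomial.aeval ((Matrix.reindex e e)
        (Matrix.blockDiagonal' (fun i : Fin s => jordanBlock (k i) (a i)))))
      (pchar s k a) = 0 := by
  rw [aeval_D_eq]
  have h1 : (fun i : Fin s => (Polynomial.aeval (jordanBlock (k i) (a i))) (pchar s k a))
      = fun _ => 0 := funext fun i => aeval_jordan_pchar s k a i
  rw [h1]
  have h2 : Matrix.blockDiagonal' (fun i : Fin s =>
      (0 : Matrix (Fin (k i)) (Fin (k i)) ℂ)) = 0 := Matrix.blockDiagonal'_zero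
  rw [h2]
  simp

lemma D_mulVec_vlast (s : ℕ) (k : Fin s → ℕ)
    (e : (Σ i : Fin s, Fin (k i)) ≃ Fin (∑ i : Fin s, k i))
    (M : ∀ i : Fin s, Matrix (Fin (k i)) (Fin (k i)) ℂ) :
    (Matrix.reindex e e) (Matrix.blockDiagonal' M) *ᵥ (vlast s k ∘ e.symm)
      = (Matrix.blockDiagonal' M *ᵥ vlast s k) ∘ e.symm := by
  rw [Matrix.reindex_apply, Matrix.submatrix_mulVec_equiv]
  rw [Equiv.symm_symm]
  have h3 : (vlast s k ∘ ⇑e.symm) ∘ ⇑e = vlast s k := by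
    funext σ
    simp
  rw [h3]

lemma det_kry_D_ne_zero (s : ℕ) (k : Fin s → ℕ) (hk : ∀ i, 1 ≤ k i)
    (a : Fin s → ℂ) (ha : Function.Injective a)
    (e : (Σ i : Fin s, Fin (k i)) ≃ Fin (∑ i : Fin s, k i)) :
    (kry ((Matrix.reindex e e)
        (Matrix.blockDiagonal' (fun i : Fin s => jordanBlock (k i) (a i))))
      (vlast s k ∘ e.symm)).det ≠ 0 := by
  set D := (Matrix.reindex e e)
      (Matrix.blockDiagonal' (fun i : Fin s => jordanBlock (k i) (a i))) with hD
  intro h0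
  obtain ⟨c, hc0, hc⟩ := (Matrix.exists_mulVec_eq_zero_iff).mpr h0
  set q : ℂ[X] := ∑ j : Fin (∑ i : Fin s, k i), C (c j) * X ^ (j : ℕ) with hq
  have hqv : (Polynomial.aeval D) q *ᵥ (vlast s k ∘ e.symm) = 0 := by
    rw [← kry_mulVec]; exact hc
  -- transfer to blocks
  have hblock : ∀ i : Fin s,
      (Polynomial.aeval (jordanBlock (k i) (a i))) q *ᵥ
        Pi.single (⟨k i - 1, by have := hk i; omega⟩ : Fin (k i)) 1 = 0 := by
    intro i
    funext m
    have h1 := congrFun hqv (e ⟨i, m⟩)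
    rw [hD, aeval_D_eq, D_mulVec_vlast] at h1
    rw [Function.comp_apply, Equiv.symm_apply_apply] at h1
    rw [blockDiagonal'_mulVec] at h1
    rw [Pi.zero_apply] at h1
    have h2 : (fun m' : Fin (k i) => vlast s k ⟨i, m'⟩)
        = Pi.single (⟨k i - 1, by have := hk i; omega⟩ : Fin (k i)) 1 := by
      funext m'
      rw [Pi.single_apply, vlast]
      simp only [Fin.ext_iff, Fin.val_mk]
    rw [h2] at h1
    rw [Pi.zero_apply]
    exact h1
  have hdvd : ∀ i : Fin s, (X - C (a i)) ^ (k i) ∣ q := fun i =>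
    dvd_of_aeval_jordan_mulVec_eq_zero (hk i) (a i) q (hblock i)
  have hpdvd : pchar s k a ∣ q := by
    rw [pchar]
    apply Finset.prod_dvd_of_coprime
    · intro i _ j _ hij
      exact ((Polynomial.pairwise_coprime_X_sub_C ha) hij).pow
    · intro i _
      exact hdvd i
  -- q ≠ 0
  obtain ⟨j0, hj0⟩ : ∃ j0, c j0 ≠ 0 := Function.ne_iff.mp hc0
  have hcoeff : ∀ j : Fin (∑ i : Fin s, k i), q.coeff (j : ℕ) = c j := by
    intro j
    rw [hq, Polynomial.finset_sum_coeff]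
    rw [Finset.sum_eq_single j]
    · rw [Polynomial.coeff_C_mul, Polynomial.coeff_X_pow, if_pos rfl, mul_one]
    · intro l _ hl
      rw [Polynomial.coeff_C_mul, Polynomial.coeff_X_pow,
        if_neg (fun hh => hl (Fin.ext hh.symm)), mul_zero]
    · intro h; exact absurd (Finset.mem_univ _) h
  have hq0 : q ≠ 0 := fun h => hj0 (by rw [← hcoeff j0, h, Polynomial.coeff_zero])
  have hdegq : q.degree < ((∑ i : Fin s, k i : ℕ) : WithBot ℕ) := by
    rw [hq]
    apply lt_of_le_of_lt (Polynomial.degree_sum_le _ _)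
    rw [Finset.sup_lt_iff (by exact_mod_cast WithBot.bot_lt_coe _)]
    intro j _
    apply lt_of_le_of_lt (Polynomial.degree_C_mul_X_pow_le _ _)
    exact_mod_cast j.isLt
  have hnd : q.natDegree < ∑ i : Fin s, k i :=
    (Polynomial.natDegree_lt_iff_degree_lt hq0).mpr hdegq
  have := Polynomial.natDegree_le_of_dvd hpdvd hq0
  rw [pchar_natDegree] at this
  omega

end Chunk6

noncomputable section Chunk7
open Polynomial Matrix Finset

lemma charpoly_bidiag {K : ℕ} (d : Fin K → ℂ) :
    (bidiag d).charpoly = ∏ j : Fin K, (X - C (d j)) := by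
  rw [Matrix.charpoly_of_upperTriangular]
  · apply Finset.prod_congr rfl
    intro j _
    congr 1
    rw [bidiag, Matrix.of_apply, if_pos rfl]
  · intro i j hij
    simp only [id] at hij
    have h1 : (j : ℕ) ≠ (i : ℕ) := by omega
    have h2 : (j : ℕ) ≠ (i : ℕ) + 1 := by omega
    rw [bidiag, Matrix.of_apply, if_neg h1, if_neg h2]

lemma prod_d_eq_pchar (s : ℕ) (k : Fin s → ℕ) (a : Fin s → ℂ)
    (e : (Σ i : Fin s, Fin (k i)) ≃ Fin (∑ i : Fin s, k i)) :
    (∏ j : Fin (∑ i : Fin s, k i), (X - C (a ((e.symm j).1)))) = pchar s k a := by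
  rw [← Equiv.prod_comp e (fun j => X - C (a ((e.symm j).1)))]
  simp only [Equiv.symm_apply_apply]
  rw [← Finset.univ_sigma_univ, Finset.prod_sigma]
  rw [pchar]
  apply Finset.prod_congr rfl
  intro i _
  simp

lemma aeval_bidiag_pchar (s : ℕ) (k : Fin s → ℕ) (a : Fin s → ℂ)
    (e : (Σ i : Fin s, Fin (k i)) ≃ Fin (∑ i : Fin s, k i)) :
    (Polynomial.aeval (bidiag (fun j : Fin (∑ i : Fin s, k i) => a ((e.symm j).1))))
      (pchar s k a) = 0 := by
  rw [← prod_d_eq_pchar s k a e, ← charpoly_bidiag]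
  exact Matrix.aeval_self_charpoly _

/-- The similarity: for injective `a`, the bidiagonal matrix with the right diagonal is
similar to the reindexed block diagonal sum. -/
lemma bidiag_similar (s : ℕ) (hs : 1 ≤ s) (k : Fin s → ℕ) (hk : ∀ i, 1 ≤ k i)
    (a : Fin s → ℂ) (ha : Function.Injective a)
    (e : (Σ i : Fin s, Fin (k i)) ≃ Fin (∑ i : Fin s, k i)) :
    ∃ P : (Matrix (Fin (∑ i : Fin s, k i)) (Fin (∑ i : Fin s, k i)) ℂ)ˣ,
      bidiag (fun j : Fin (∑ i : Fin s, k i) => a ((e.symm j).1))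
        = (↑P : Matrix _ _ ℂ) * ((Matrix.reindex e e)
            (Matrix.blockDiagonal' (fun i : Fin s => jordanBlock (k i) (a i))))
          * (↑(P⁻¹) : Matrix _ _ ℂ) := by
  have hK : 1 ≤ ∑ i : Fin s, k i := by
    calc 1 ≤ s := hs
    _ = ∑ _i : Fin s, 1 := by simp
    _ ≤ ∑ i : Fin s, k i := Finset.sum_le_sum fun i _ => hk i
  set d : Fin (∑ i : Fin s, k i) → ℂ := fun j => a ((e.symm j).1) with hd
  set p : ℂ[X] := pchar s k a with hp
  set D := (Matrix.reindex e e)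
      (Matrix.blockDiagonal' (fun i : Fin s => jordanBlock (k i) (a i))) with hD
  set w : Fin (∑ i : Fin s, k i) → ℂ :=
    Pi.single (⟨(∑ i : Fin s, k i) - 1, by omega⟩ : Fin (∑ i : Fin s, k i)) 1 with hw
  set v : Fin (∑ i : Fin s, k i) → ℂ := vlast s k ∘ e.symm with hv
  set QB := kry (bidiag d) w with hQB
  set QA := kry D v with hQA
  have hpm : p.Monic := pchar_monic s k a
  have hpd : p.natDegree = ∑ i : Fin s, k i := pchar_natDegree s k a
  have hrelB : bidiag d * QB = QB * compan (∑ i : Fin s, k i) p :=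
    kry_spec (bidiag d) w p hpm hpd (aeval_bidiag_pchar s k a e)
  have hrelA : D * QA = QA * compan (∑ i : Fin s, k i) p :=
    kry_spec D v p hpm hpd (aeval_D_pchar_zero s k a e)
  have hdetB : IsUnit QB :=
    (Matrix.isUnit_iff_isUnit_det QB).mpr
      (isUnit_iff_ne_zero.mpr (det_kry_bidiag_ne_zero hK d))
  have hdetA : IsUnit QA :=
    (Matrix.isUnit_iff_isUnit_det QA).mpr
      (isUnit_iff_ne_zero.mpr (det_kry_D_ne_zero s k hk a ha e))
  set UB := hdetB.unit with hUB
  set UA := hdetA.unit with hUA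
  have hUBv : (↑UB : Matrix _ _ ℂ) = QB := hdetB.unit_spec
  have hUAv : (↑UA : Matrix _ _ ℂ) = QA := hdetA.unit_spec
  refine ⟨UB * UA⁻¹, ?_⟩
  have hC : compan (∑ i : Fin s, k i) p
      = (↑(UA⁻¹) : Matrix _ _ ℂ) * D * (↑UA : Matrix _ _ ℂ) := by
    have h1 : (↑(UA⁻¹) : Matrix _ _ ℂ) * (D * QA)
        = (↑(UA⁻¹) : Matrix _ _ ℂ) * (QA * compan (∑ i : Fin s, k i) p) := by rw [hrelA]
    rw [← hUAv] at h1
    rw [← Matrix.mul_assoc, ← Matrix.mul_assoc, Units.inv_mul, Matrix.one_mul] at h1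
    rw [← h1, Matrix.mul_assoc]
  have key : bidiag d * (↑(UB * UA⁻¹) : Matrix _ _ ℂ)
      = (↑(UB * UA⁻¹) : Matrix _ _ ℂ) * D := by
    rw [Units.val_mul, ← Matrix.mul_assoc, hUBv, hrelB, hC]
    rw [← hUBv]
    calc (↑UB : Matrix _ _ ℂ) * ((↑(UA⁻¹) : Matrix _ _ ℂ) * D * (↑UA : Matrix _ _ ℂ))
        * (↑(UA⁻¹) : Matrix _ _ ℂ)
        = (↑UB : Matrix _ _ ℂ) * (↑(UA⁻¹) : Matrix _ _ ℂ) * D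
          * ((↑UA : Matrix _ _ ℂ) * (↑(UA⁻¹) : Matrix _ _ ℂ)) := by
          simp only [Matrix.mul_assoc]
    _ = (↑UB : Matrix _ _ ℂ) * (↑(UA⁻¹) : Matrix _ _ ℂ) * D := by
          rw [Units.mul_inv, Matrix.mul_one]
  calc bidiag d
      = bidiag d * ((↑(UB * UA⁻¹) : Matrix _ _ ℂ) * (↑((UB * UA⁻¹)⁻¹) : Matrix _ _ ℂ)) := by
        rw [Units.mul_inv, Matrix.mul_one]
  _ = (bidiag d * (↑(UB * UA⁻¹) : Matrix _ _ ℂ)) * (↑((UB * UA⁻¹)⁻¹) : Matrix _ _ ℂ) := by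
        rw [Matrix.mul_assoc]
  _ = (↑(UB * UA⁻¹) : Matrix _ _ ℂ) * D * (↑((UB * UA⁻¹)⁻¹) : Matrix _ _ ℂ) := by rw [key]

end Chunk7

noncomputable section Chunk8
open Polynomial Matrix Finset

lemma bidiag_decomp {K : ℕ} (μ : ℂ) (t : ℂ) (c : Fin K → ℂ) :
    bidiag (fun j => μ + t * c j)
      = bidiag (fun _ => μ) + t • Matrix.diagonal c := by
  ext i j
  simp only [bidiag, Matrix.of_apply, Matrix.add_apply, Matrix.smul_apply,
    Matrix.diagonal_apply, smul_eq_mul]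
  rcases eq_or_ne i j with h | h
  · subst h; simp
  · have h1 : (j : ℕ) ≠ (i : ℕ) := fun hh => h (Fin.ext hh.symm)
    rw [if_neg h1, if_neg h1, if_neg h, mul_zero, add_zero]

lemma jordanBlock_eq_bidiag (K : ℕ) (μ : ℂ) :
    jordanBlock K μ = bidiag (fun _ => μ) := rfl


/-- Coalescence of eigenvalues for matrices: the single Jordan block `J_K(μ)`, with
`K = k₁ + ⋯ + k_s`, lies in the closure of the set of matrices similar to the direct sum
`J_{k₁}(a₁) ⊕ ⋯ ⊕ J_{k_s}(a_s)` with `a₁, …, a_s` pairwise distinct. The identification of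
the index set `Σ i, Fin (k i)` of the block-diagonal direct sum with `Fin (∑ i, k i)` is
given by an arbitrary equivalence `e`. -/
theorem jordanBlock_mem_closure_coalescence (μ : ℂ) (s : ℕ) (hs : 1 ≤ s)
    (k : Fin s → ℕ) (hk : ∀ i, 1 ≤ k i)
    (e : (Σ i : Fin s, Fin (k i)) ≃ Fin (∑ i : Fin s, k i)) :
    jordanBlock (∑ i : Fin s, k i) μ ∈
      closure { M : Matrix (Fin (∑ i : Fin s, k i)) (Fin (∑ i : Fin s, k i)) ℂ |
        ∃ a : Fin s → ℂ, Function.Injective a ∧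
          ∃ P : GL (Fin (∑ i : Fin s, k i)) ℂ,
            M = (↑P : Matrix (Fin (∑ i : Fin s, k i)) (Fin (∑ i : Fin s, k i)) ℂ) * (Matrix.reindex e e
              (Matrix.blockDiagonal' (fun i : Fin s => jordanBlock (k i) (a i)))) * (↑(P⁻¹) : Matrix (Fin (∑ i : Fin s, k i)) (Fin (∑ i : Fin s, k i)) ℂ) } := by
  set c : Fin (∑ i : Fin s, k i) → ℂ := fun j => (((e.symm j).1 : ℕ) : ℂ) with hc
  -- the approximating family
  set f : ℂ → Matrix (Fin (∑ i : Fin s, k i)) (Fin (∑ i : Fin s, k i)) ℂ :=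
    fun t => bidiag (fun j => μ + t * c j) with hf
  have hf0 : f 0 = jordanBlock (∑ i : Fin s, k i) μ := by
    rw [hf, jordanBlock_eq_bidiag]
    congr 1
    funext j
    simp
  have hNB : (nhdsWithin (0 : ℂ) {x | x ≠ 0}).NeBot := by
    have h1 : {x : ℂ | x ≠ 0} = {(0 : ℂ)}ᶜ := by
      ext x; simp
    rw [h1]
    infer_instance
  refine mem_closure_of_tendsto (f := f) (b := nhdsWithin (0 : ℂ) {x | x ≠ 0}) ?_ ?_
  · -- tendsto
    rw [← hf0]
    apply Filter.Tendsto.mono_left _ nhdsWithin_le_nhds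
    have hcont : Continuous f := by
      have : f = fun t => bidiag (fun _ => μ) + t • Matrix.diagonal c := by
        funext t
        show bidiag (fun j => μ + t * c j) = _
        rw [bidiag_decomp]
      rw [this]
      exact continuous_const.add (continuous_id.smul continuous_const)
    exact hcont.tendsto 0
  · -- eventually in the set
    apply Filter.eventually_of_mem self_mem_nhdsWithin
    intro t ht
    have ht0 : t ≠ 0 := ht
    set a : Fin s → ℂ := fun i => μ + t * ((i : ℕ) : ℂ) with ha
    have hainj : Function.Injective a := by
      intro i j hij
      rw [ha] at hij
      simp only [add_right_inj] at hij
      have h2 := mul_left_cancel₀ ht0 hij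
      exact Fin.ext (Nat.cast_injective h2)
    obtain ⟨P, hP⟩ := bidiag_similar s hs k hk a hainj e
    refine ⟨a, hainj, P, ?_⟩
    have : f t = bidiag (fun j => a ((e.symm j).1)) := rfl
    rw [this, hP]

end Chunk8
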